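/- Let X be a T1 regular space. Then no point of K(X) \ F(X), the set of nonempty infinite compact subsets of X, is an isolated point of the subspace K(X) \ F(X) of the hyperspace K(X) with the Vietoris topology. -/

import Mathlib

open Set TopologicalSpace

universe u v

/-- The Fell topology on the collection of all subsets of `X`, generated by the subbase
consisting of the sets `U⁻ = {H | H ∩ U ≠ ∅}` for `U` open and
`(Kᶜ)⁺ = {H | H ⊆ Kᶜ}` for `K` compact. -/
def fellTopology (X : Type u) [TopologicalSpace X] : TopologicalSpace (Set X) :=
  TopologicalSpace.generateFrom
    ({S | ∃ U : Set X, IsOpen U ∧ S = {H : Set X | (H ∩ U).Nonempty}} ∪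
     {S | ∃ K : Set X, IsCompact K ∧ S = {H : Set X | H ⊆ Kᶜ}})

/-- The Vietoris topology on the collection of all subsets of `X`, generated by the subbase
consisting of the sets `U⁺ = {H | H ⊆ U}` and `U⁻ = {H | H ∩ U ≠ ∅}` for `U` open. -/
def vietorisTopology (X : Type u) [TopologicalSpace X] : TopologicalSpace (Set X) :=
  TopologicalSpace.generateFrom
    ({S | ∃ U : Set X, IsOpen U ∧ S = {H : Set X | H ⊆ U}} ∪
     {S | ∃ U : Set X, IsOpen U ∧ S = {H : Set X | (H ∩ U).Nonempty}})

/-- A collection `S` of subsets of `X`, viewed as a hyperspace with the Fell topology. -/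
def FellHyper (X : Type u) [TopologicalSpace X] (S : Set (Set X)) : Type u :=
  {A : Set X // A ∈ S}

/-- A collection `S` of subsets of `X`, viewed as a hyperspace with the Vietoris topology. -/
def VietorisHyper (X : Type u) [TopologicalSpace X] (S : Set (Set X)) : Type u :=
  {A : Set X // A ∈ S}

instance FellHyper.instTopologicalSpace (X : Type u) [TopologicalSpace X] (S : Set (Set X)) :
    TopologicalSpace (FellHyper X S) :=
  TopologicalSpace.induced (Subtype.val : {A : Set X // A ∈ S} → Set X) (fellTopology X)

instance VietorisHyper.instTopologicalSpace (X : Type u) [TopologicalSpace X] (S : Set (Set X)) :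
    TopologicalSpace (VietorisHyper X S) :=
  TopologicalSpace.induced (Subtype.val : {A : Set X // A ∈ S} → Set X) (vietorisTopology X)

/-- The underlying subset of `X` of a point of a Fell hyperspace. -/
def FellHyper.carrier {X : Type u} [TopologicalSpace X] {S : Set (Set X)}
    (A : FellHyper X S) : Set X :=
  Subtype.val A

/-- The underlying subset of `X` of a point of a Vietoris hyperspace. -/
def VietorisHyper.carrier {X : Type u} [TopologicalSpace X] {S : Set (Set X)}
    (A : VietorisHyper X S) : Set X :=
  Subtype.val A

/-- `CL(X)`: the nonempty closed subsets of `X`. -/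
def CL (X : Type u) [TopologicalSpace X] : Set (Set X) := {A | A.Nonempty ∧ IsClosed A}

/-- `𝒦(X)`: the nonempty compact subsets of `X`. -/
def Kcal (X : Type u) [TopologicalSpace X] : Set (Set X) := {A | A.Nonempty ∧ IsCompact A}

/-- `ℱ(X)`: the nonempty finite subsets of `X`. -/
def Fcal (X : Type u) : Set (Set X) := {A | A.Nonempty ∧ A.Finite}

/-- `ℱₙ(X)`: the nonempty subsets of `X` with at most `n` points. -/
def Fn (X : Type u) (n : ℕ) : Set (Set X) := {A | A.Nonempty ∧ A.encard ≤ n}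

/-- A space is a `D₁`-space if every nonempty closed subset has a countable
neighborhood base. -/
def IsD1Space (Y : Type v) [TopologicalSpace Y] : Prop :=
  ∀ F : Set Y, F.Nonempty → IsClosed F →
    ∃ B : ℕ → Set Y, (∀ n, IsOpen (B n) ∧ F ⊆ B n) ∧
      ∀ V : Set Y, IsOpen V → F ⊆ V → ∃ n, B n ⊆ V

/-- A space is a `D₀`-space if every nonempty compact subset has a countable
neighborhood base. -/
def IsD0Space (Y : Type v) [TopologicalSpace Y] : Prop :=
  ∀ F : Set Y, F.Nonempty → IsCompact F →
    ∃ B : ℕ → Set Y, (∀ n, IsOpen (B n) ∧ F ⊆ B n) ∧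
      ∀ V : Set Y, IsOpen V → F ⊆ V → ∃ n, B n ⊆ V

/-- A space has a `G_δ`-diagonal if the diagonal is a `G_δ`-set in `X × X`. -/
def HasGdeltaDiagonal (X : Type u) [TopologicalSpace X] : Prop :=
  ∃ U : ℕ → Set (X × X), (∀ n, IsOpen (U n)) ∧ (⋂ n, U n) = {p : X × X | p.1 = p.2}

/-- A space is perfect if every closed subset is a `G_δ`-set. -/
def IsPerfectSpace (Y : Type v) [TopologicalSpace Y] : Prop :=
  ∀ F : Set Y, IsClosed F → ∃ U : ℕ → Set Y, (∀ n, IsOpen (U n)) ∧ F = ⋂ n, U n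

/-- A space has the compact-`G_δ` property if every compact subset is a `G_δ`-set. -/
def CompactGDeltaProperty (Y : Type v) [TopologicalSpace Y] : Prop :=
  ∀ K : Set Y, IsCompact K → ∃ U : ℕ → Set Y, (∀ n, IsOpen (U n)) ∧ K = ⋂ n, U n

/-- `γ`-space. -/
def IsGammaSpace (Y : Type v) [TopologicalSpace Y] : Prop :=
  ∃ g : ℕ → Y → Set Y,
    (∀ n y, IsOpen (g n y) ∧ y ∈ g n y) ∧
    (∀ y, ∀ V : Set Y, IsOpen V → y ∈ V → ∃ n, g n y ⊆ V) ∧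
    (∀ n y, ∃ m, ∀ z ∈ g m y, g m z ⊆ g n y)

/-- A space has a `G_δ*`-diagonal if there is a sequence `𝒰 n` of open covers such that
`{x} = ⋂ n, closure (st(x, 𝒰 n))` for every `x`. -/
def HasGdeltaStarDiagonal (X : Type u) [TopologicalSpace X] : Prop :=
  ∃ 𝒰 : ℕ → Set (Set X),
    (∀ n, ∀ U ∈ 𝒰 n, IsOpen U) ∧ (∀ n, ⋃₀ 𝒰 n = univ) ∧
    ∀ x : X, (⋂ n, closure (⋃₀ {U ∈ 𝒰 n | x ∈ U})) = {x}


private lemma vietoris_key {X : Type u} [TopologicalSpace X] {O : Set (Set X)}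
    (hO : TopologicalSpace.GenerateOpen
      ({S | ∃ U : Set X, IsOpen U ∧ S = {H : Set X | H ⊆ U}} ∪
       {S | ∃ U : Set X, IsOpen U ∧ S = {H : Set X | (H ∩ U).Nonempty}}) O) :
    ∀ A ∈ O, ∃ (U : Set X) (T : Finset (Set X)),
      IsOpen U ∧ A ⊆ U ∧ (∀ t ∈ T, IsOpen t ∧ (A ∩ t).Nonempty) ∧
      ∀ H : Set X, H ⊆ U → (∀ t ∈ T, (H ∩ t).Nonempty) → H ∈ O := by
  classical
  induction hO with
  | basic S hS =>
    intro A hA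
    rcases hS with ⟨U, hU, rfl⟩ | ⟨U, hU, rfl⟩
    · exact ⟨U, ∅, hU, hA, by simp, fun H hH _ => hH⟩
    · refine ⟨univ, {U}, isOpen_univ, subset_univ _, ?_, fun H _ hT => hT U (by simp)⟩
      intro t ht
      rw [Finset.mem_singleton] at ht
      subst ht
      exact ⟨hU, hA⟩
  | univ =>
    intro A _
    exact ⟨univ, ∅, isOpen_univ, subset_univ _, by simp, fun H _ _ => mem_univ H⟩
  | inter O1 O2 h1 h2 ih1 ih2 =>
    intro A hA
    obtain ⟨U1, T1, hU1, hAU1, hT1, hmem1⟩ := ih1 A hA.1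
    obtain ⟨U2, T2, hU2, hAU2, hT2, hmem2⟩ := ih2 A hA.2
    refine ⟨U1 ∩ U2, T1 ∪ T2, hU1.inter hU2, subset_inter hAU1 hAU2, ?_, ?_⟩
    · intro t ht
      rcases Finset.mem_union.mp ht with h | h
      exacts [hT1 t h, hT2 t h]
    · intro H hH hT
      exact ⟨hmem1 H (hH.trans inter_subset_left) (fun t ht => hT t (Finset.mem_union_left _ ht)),
        hmem2 H (hH.trans inter_subset_right) (fun t ht => hT t (Finset.mem_union_right _ ht))⟩
  | sUnion 𝒮 h ih =>
    intro A hA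
    obtain ⟨O', hO𝒮, hAO⟩ := hA
    obtain ⟨U, T, hU, hAU, hT, hmem⟩ := ih O' hO𝒮 A hAO
    exact ⟨U, T, hU, hAU, hT, fun H h1 h2 => ⟨O', hO𝒮, hmem H h1 h2⟩⟩

private lemma exists_acc_pt {X : Type u} [TopologicalSpace X] {A : Set X} (hc : IsCompact A)
    (hinf : A.Infinite) : ∃ x ∈ A, ∀ W : Set X, IsOpen W → x ∈ W → (A ∩ W).Infinite := by
  by_contra hcon
  push_neg at hcon
  have hW : ∀ x : X, ∃ W : Set X, x ∈ A → (IsOpen W ∧ x ∈ W ∧ (A ∩ W).Finite) := by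
    intro x
    by_cases hx : x ∈ A
    · obtain ⟨W, hWo, hxW, hfin⟩ := hcon x hx
      exact ⟨W, fun _ => ⟨hWo, hxW, hfin⟩⟩
    · exact ⟨univ, fun h => absurd h hx⟩
  choose W hWp using hW
  obtain ⟨t, hts, hcov⟩ := hc.elim_nhds_subcover W
    (fun x hx => ((hWp x hx).1.mem_nhds (hWp x hx).2.1))
  have : A.Finite := by
    have : A ⊆ ⋃ x ∈ t, A ∩ W x := by
      intro y hy
      obtain ⟨x, hxt, hyW⟩ := Set.mem_iUnion₂.mp (hcov hy)
      exact Set.mem_iUnion₂.mpr ⟨x, hxt, hy, hyW⟩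
    exact Set.Finite.subset (t.finite_toSet.biUnion fun x hx => (hWp x (hts x hx)).2.2) this
  exact hinf this

/-- no point of `𝒦(X) \ ℱ(X)` is isolated in the Vietoris topology. -/
theorem statement9 (X : Type u) [TopologicalSpace X] [T1Space X] [RegularSpace X]
    (A : VietorisHyper X (Kcal X \ Fcal X)) :
    ¬ IsOpen ({A} : Set (VietorisHyper X (Kcal X \ Fcal X))) := by
  intro h
  have h' : ∃ O, (vietorisTopology X).IsOpen O ∧
      (Subtype.val : {B : Set X // B ∈ Kcal X \ Fcal X} → Set X) ⁻¹' O = {A} := h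
  obtain ⟨O, hO, hpre⟩ := h'
  have hAO : A.val ∈ O := by
    have : A ∈ (Subtype.val : {B : Set X // B ∈ Kcal X \ Fcal X} → Set X) ⁻¹' O := by
      rw [hpre]; rfl
    exact this
  have hAne : A.val.Nonempty := A.2.1.1
  have hAc : IsCompact A.val := A.2.1.2
  have hAinf : A.val.Infinite := fun hfin => A.2.2 ⟨hAne, hfin⟩
  obtain ⟨U, T, hU, hAU, hT, hmem⟩ := vietoris_key hO A.val hAO
  obtain ⟨x, hxA, hx⟩ := exists_acc_pt hAc hAinf
  have hchoice : ∀ t : Set X, ∃ y : X, t ∈ T → y ∈ A.val ∩ t := by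
    intro t
    by_cases ht : t ∈ T
    · obtain ⟨y, hy⟩ := (hT t ht).2
      exact ⟨y, fun _ => hy⟩
    · exact ⟨x, fun h => absurd h ht⟩
  choose a ha using hchoice
  set S : Set X := a '' ↑T with hS
  have hSfin : S.Finite := T.finite_toSet.image a
  have hSA : S ⊆ A.val := by
    rintro y ⟨t, ht, rfl⟩
    exact (ha t ht).1
  obtain ⟨b, hbA, hbS⟩ := (hAinf.diff (hSfin.insert x)).nonempty
  have hbx : b ≠ x := fun hbx => hbS (by rw [hbx]; exact Set.mem_insert x S)
  have hnb : ({x}ᶜ : Set X) ∈ nhds b := (isOpen_compl_singleton).mem_nhds (by simpa using hbx)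
  obtain ⟨tt, htt, httc, htts⟩ := exists_mem_nhds_isClosed_subset hnb
  set V : Set X := interior tt with hV
  have hbV : b ∈ V := mem_interior_iff_mem_nhds.mpr htt
  have hclV : closure V ⊆ ({x}ᶜ : Set X) :=
    (closure_minimal interior_subset httc).trans htts
  set H : Set X := (A.val \ V) ∪ S with hHdef
  have hHA : H ⊆ A.val := union_subset diff_subset hSA
  have hHc : IsCompact H :=
    (hAc.diff isOpen_interior).union hSfin.isCompact
  have hHinf : H.Infinite := by
    have hxcl : x ∈ (closure V)ᶜ := fun hxc => hclV hxc rfl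
    have := hx (closure V)ᶜ (isOpen_compl_iff.mpr isClosed_closure) hxcl
    refine this.mono ?_
    intro y ⟨hyA, hyc⟩
    exact Or.inl ⟨hyA, fun hyV => hyc (subset_closure hyV)⟩
  have hHO : H ∈ O := by
    refine hmem H (hHA.trans hAU) ?_
    intro t ht
    exact ⟨a t, Or.inr ⟨t, ht, rfl⟩, (ha t ht).2⟩
  have hHmem : H ∈ Kcal X \ Fcal X :=
    ⟨⟨hHinf.nonempty, hHc⟩, fun hF => hHinf hF.2⟩
  have : (⟨H, hHmem⟩ : {B : Set X // B ∈ Kcal X \ Fcal X}) ∈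
      (Subtype.val : {B : Set X // B ∈ Kcal X \ Fcal X} → Set X) ⁻¹' O := hHO
  rw [hpre] at this
  have hHeq : H = A.val := congrArg Subtype.val this
  have hbH : b ∉ H := by
    rintro (⟨_, hbV'⟩ | hbS')
    · exact hbV' hbV
    · exact hbS (Set.mem_insert_of_mem x hbS')
  exact hbH (hHeq ▸ hbA)
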